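/- The Hamilton vector field of H_N = Σⱼ(μⱼvⱼ²/2 - μⱼ³/6) + V_N(a,v,θ,μ) with respect to the symplectic form ω_M = Σⱼ(μⱼdvⱼ∧daⱼ + vⱼdμⱼ∧daⱼ + dθⱼ∧dμⱼ) generates exactly the effective dynamics equations: v̇ⱼ = -μⱼ⁻¹(∂_{aⱼ}V_N + vⱼ∂_{θⱼ}V_N), ȧⱼ = vⱼ + μⱼ⁻¹∂_{vⱼ}V_N, μ̇ⱼ = ∂_{θⱼ}V_N, θ̇ⱼ = vⱼ²/2 + μⱼ²/2 + μⱼ⁻¹vⱼ∂_{vⱼ}V_N - ∂_{μⱼ}V_N. -/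

import Mathlib

open Matrix

/-- Coordinate matrix of `ω_M = Σⱼ(μⱼdvⱼ∧daⱼ + vⱼdμⱼ∧daⱼ + dθⱼ∧dμⱼ)`;
indices in `Fin 4 × Fin N`, blocks `0,1,2,3` = `a,v,θ,μ`. -/
def Omega (N : ℕ) (p : Fin 4 × Fin N → ℝ) :
    Matrix (Fin 4 × Fin N) (Fin 4 × Fin N) ℝ :=
  fun i j =>
    if i.2 = j.2 then
      if i.1 = 1 ∧ j.1 = 0 then p (3, j.2)
      else if i.1 = 0 ∧ j.1 = 1 then -p (3, j.2)
      else if i.1 = 3 ∧ j.1 = 0 then p (1, j.2)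
      else if i.1 = 0 ∧ j.1 = 3 then -p (1, j.2)
      else if i.1 = 2 ∧ j.1 = 3 then 1
      else if i.1 = 3 ∧ j.1 = 2 then -1
      else 0
    else 0

set_option maxHeartbeats 2000000 in
/-- The Hamilton vector field of
`H_N = Σⱼ(μⱼvⱼ²/2 - μⱼ³/6) + V_N` with respect to `ω_M` (with the
convention `dH_N = ω_M(·, Ξ)`) is exactly the right-hand side of the
effective dynamics equations (3.10). -/
theorem hamilton_vector_field_effective_dynamics (N : ℕ)
    (VN : (Fin 4 × Fin N → ℝ) → ℝ) (hVN : ContDiff ℝ 1 VN)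
    (p : Fin 4 × Fin N → ℝ) (hμ : ∀ j, 0 < p (3, j))
    (Ξ : Fin 4 × Fin N → ℝ)
    (hΞa : ∀ j, Ξ (0, j) =
      p (1, j) + (p (3, j))⁻¹ * fderiv ℝ VN p (Pi.single (1, j) 1))
    (hΞv : ∀ j, Ξ (1, j) =
      -(p (3, j))⁻¹ * (fderiv ℝ VN p (Pi.single (0, j) 1)
        + p (1, j) * fderiv ℝ VN p (Pi.single (2, j) 1)))
    (hΞθ : ∀ j, Ξ (2, j) =
      (p (1, j))^2/2 + (p (3, j))^2/2
        + (p (3, j))⁻¹ * p (1, j) * fderiv ℝ VN p (Pi.single (1, j) 1)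
        - fderiv ℝ VN p (Pi.single (3, j) 1))
    (hΞμ : ∀ j, Ξ (3, j) = fderiv ℝ VN p (Pi.single (2, j) 1)) :
    ∀ Y : Fin 4 × Fin N → ℝ,
      fderiv ℝ (fun q : Fin 4 × Fin N → ℝ =>
          (∑ j, (q (3, j) * (q (1, j))^2 / 2 - (q (3, j))^3 / 6)) + VN q) p Y =
        ∑ i, ∑ j, Y i * Omega N p i j * Ξ j := by
  intro Y
  classical
  set D := fderiv ℝ VN p with hD
  have hVd : HasFDerivAt VN D p := ((hVN.differentiable one_ne_zero) p).hasFDerivAt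
  have hproj : ∀ i : Fin 4 × Fin N, HasFDerivAt (fun q : Fin 4 × Fin N → ℝ => q i)
      (ContinuousLinearMap.proj (R := ℝ) i) p :=
    fun i => hasFDerivAt_apply (𝕜 := ℝ) i p
  have hfun : (fun q : Fin 4 × Fin N → ℝ =>
      (∑ j, (q (3, j) * (q (1, j))^2 / 2 - (q (3, j))^3 / 6)) + VN q)
      = (fun q : Fin 4 × Fin N → ℝ =>
      (∑ j, (q (3, j) * q (1, j) * q (1, j) * (2:ℝ)⁻¹
          - q (3, j) * q (3, j) * q (3, j) * (6:ℝ)⁻¹)) + VN q) := by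
    funext q
    congr 1
    exact Finset.sum_congr rfl fun j _ => by ring
  rw [hfun]
  have hL : HasFDerivAt (fun q : Fin 4 × Fin N → ℝ =>
      (∑ j, (q (3, j) * q (1, j) * q (1, j) * (2:ℝ)⁻¹
          - q (3, j) * q (3, j) * q (3, j) * (6:ℝ)⁻¹)) + VN q) _ p :=
    (HasFDerivAt.fun_sum (fun b _ =>
      (((((hproj (3,b)).fun_mul (hproj (1,b))).fun_mul (hproj (1,b))).mul_const
          ((2:ℝ)⁻¹)).fun_sub
        ((((hproj (3,b)).fun_mul (hproj (3,b))).fun_mul (hproj (3,b))).mul_const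
          ((6:ℝ)⁻¹))))).fun_add hVd
  rw [hL.fderiv]
  simp only [ContinuousLinearMap.add_apply, ContinuousLinearMap.coe_sum',
    Finset.sum_apply, ContinuousLinearMap.sub_apply, ContinuousLinearMap.smul_apply,
    ContinuousLinearMap.proj_apply, smul_eq_mul]
  -- expand D Y over the basis
  have hsingle : ∀ i : Fin 4 × Fin N,
      (fun j => if i = j then (1:ℝ) else 0) = Pi.single i 1 := by
    intro i; funext j; simp [Pi.single_apply, eq_comm]
  have hDY : D Y = ∑ i : Fin 4 × Fin N, Y i * D (Pi.single i 1) := by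
    conv_lhs => rw [pi_eq_sum_univ Y]
    rw [map_sum]
    refine Finset.sum_congr rfl fun i _ => ?_
    rw [hsingle i, _root_.map_smul, smul_eq_mul]
  rw [hDY]
  -- reduce RHS inner sums
  have hR : ∀ i : Fin 4 × Fin N, (∑ j, Y i * Omega N p i j * Ξ j)
      = ∑ c : Fin 4, Y i * Omega N p i (c, i.2) * Ξ (c, i.2) := by
    intro i
    rw [Fintype.sum_prod_type]
    refine Finset.sum_congr rfl fun c _ => ?_
    rw [Finset.sum_eq_single i.2]
    · intro b _ hb
      simp [Omega, if_neg (Ne.symm hb)]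
    · intro h; exact absurd (Finset.mem_univ _) h
  simp only [hR]
  rw [Fintype.sum_prod_type (f := fun i : Fin 4 × Fin N =>
      ∑ c : Fin 4, Y i * Omega N p i (c, i.2) * Ξ (c, i.2)),
    Fintype.sum_prod_type (f := fun i : Fin 4 × Fin N => Y i * D (Pi.single i 1)),
    Finset.sum_comm (γ := Fin 4) (α := Fin N),
    Finset.sum_comm (γ := Fin 4) (α := Fin N),
    ← Finset.sum_add_distrib]
  have hrow : ∀ (a : Fin 4) (b : Fin N) (E : ℝ),
      (∀ c : Fin 4, Y (a,b) * Omega N p (a,b) (c,b) * Ξ (c,b)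
        = Y (a,b) * Omega N p (a,b) (c,b) * Ξ (c,b)) → True := fun _ _ _ _ => trivial
  have hrow0 : ∀ b : Fin N, ∑ c : Fin 4, Y ((0:Fin 4),b) * Omega N p ((0:Fin 4),b) (c,b) * Ξ (c,b)
      = Y (0,b) * (-(p (3,b) * Ξ (1,b)) - p (1,b) * Ξ (3,b)) := by
    intro b; simp [Fin.sum_univ_four, Omega]; try ring
  have hrow1 : ∀ b : Fin N, ∑ c : Fin 4, Y ((1:Fin 4),b) * Omega N p ((1:Fin 4),b) (c,b) * Ξ (c,b)
      = Y (1,b) * (p (3,b) * Ξ (0,b)) := by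
    intro b; simp [Fin.sum_univ_four, Omega]; try ring
  have hrow2 : ∀ b : Fin N, ∑ c : Fin 4, Y ((2:Fin 4),b) * Omega N p ((2:Fin 4),b) (c,b) * Ξ (c,b)
      = Y (2,b) * Ξ (3,b) := by
    intro b; simp [Fin.sum_univ_four, Omega]; try ring
  have hrow3 : ∀ b : Fin N, ∑ c : Fin 4, Y ((3:Fin 4),b) * Omega N p ((3:Fin 4),b) (c,b) * Ξ (c,b)
      = Y (3,b) * (p (1,b) * Ξ (0,b) - Ξ (2,b)) := by
    intro b; simp [Fin.sum_univ_four, Omega]; try ring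
  refine Finset.sum_congr rfl fun b _ => ?_
  conv_rhs => rw [Fin.sum_univ_four]
  rw [hrow0 b, hrow1 b, hrow2 b, hrow3 b]
  rw [Fin.sum_univ_four]
  rw [hΞa b, hΞv b, hΞθ b, hΞμ b]
  have h3 : p (3, b) ≠ 0 := (hμ b).ne'
  field_simp
  ring
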